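/- For nonnegative integers A, B, C with C <= B <= A, the sum over j from C to B of C^{A-j}_{B-j} * binomial(2j+1, j-C) equals binomial(A+B+2, B-C), where C^m_k = ((m-k+1)/(m+1)) * binomial(m+k, k). -/

import Mathlib

/-- The Catalan triangle number `C^m_n = ((m-n+1)/(m+1)) * C(m+n, n)` as a rational. -/
def catT (m n : ℕ) : ℚ := (((m : ℚ) - n + 1) / ((m : ℚ) + 1)) * Nat.choose (m + n) n

/-- Auxiliary: `V m i = C(2i+m, i)`. -/
def V (m i : ℕ) : ℕ := Nat.choose (2 * i + m) i

lemma V_zero (m : ℕ) : V m 0 = 1 := by simp [V]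

lemma V_pascal (m i : ℕ) : V (m + 1) (i + 1) = V m (i + 1) + V (m + 2) i := by
  unfold V
  have h1 : 2 * (i + 1) + (m + 1) = (2 * (i + 1) + m) + 1 := by ring
  have h2 : 2 * (i + 1) + m = (2 * i + (m + 2)) := by ring
  rw [h1, Nat.choose_succ_succ' (2 * (i + 1) + m) i]
  rw [h2]
  omega

lemma catT_zero (m : ℕ) : catT m 0 = 1 := by
  have h : (m : ℚ) + 1 ≠ 0 := by positivity
  simp [catT]
  field_simp
  exact h

lemma choose_key (m n : ℕ) :
    (n + 1) * Nat.choose (m + n + 1) (n + 1) = (m + 1) * Nat.choose (m + n + 1) n := by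
  have h := Nat.choose_succ_right_eq (m + n + 1) n
  have h2 : m + n + 1 - n = m + 1 := by omega
  rw [h2] at h
  calc (n + 1) * Nat.choose (m + n + 1) (n + 1)
      = Nat.choose (m + n + 1) (n + 1) * (n + 1) := by ring
    _ = Nat.choose (m + n + 1) n * (m + 1) := h
    _ = (m + 1) * Nat.choose (m + n + 1) n := by ring

lemma catT_pascal (m n : ℕ) : catT (m + 1) (n + 1) = catT m (n + 1) + catT (m + 1) n := by
  have key : ((n : ℚ) + 1) * Nat.choose (m + n + 1) (n + 1)
      = ((m : ℚ) + 1) * Nat.choose (m + n + 1) n := by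
    exact_mod_cast congrArg (Nat.cast (R := ℚ)) (choose_key m n)
  have hp : (Nat.choose (m + 1 + (n + 1)) (n + 1) : ℚ)
      = Nat.choose (m + n + 1) n + Nat.choose (m + n + 1) (n + 1) := by
    have e : m + 1 + (n + 1) = (m + n + 1) + 1 := by omega
    rw [e, Nat.choose_succ_succ]
    push_cast
    ring
  have hq : m + (n + 1) = m + n + 1 := by omega
  have hr : m + 1 + n = m + n + 1 := by omega
  unfold catT
  rw [hp, hq, hr]
  have h1 : (m : ℚ) + 1 + 1 ≠ 0 := by positivity
  have h2 : (m : ℚ) + 1 ≠ 0 := by positivity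
  push_cast
  field_simp
  linear_combination key

lemma catalan_diff (n : ℕ) :
    catT (n + 1) (n + 1)
      = (Nat.choose (2 * n + 2) (n + 1) : ℚ) - Nat.choose (2 * n + 2) n := by
  have h := Nat.choose_succ_right_eq (2 * n + 2) n
  have h2 : 2 * n + 2 - n = n + 2 := by omega
  rw [h2] at h
  have key : (Nat.choose (2 * n + 2) (n + 1) : ℚ) * (n + 1)
      = (Nat.choose (2 * n + 2) n : ℚ) * (n + 2) := by exact_mod_cast congrArg (Nat.cast (R := ℚ)) h
  have harg : (n + 1) + (n + 1) = 2 * n + 2 := by omega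
  unfold catT
  rw [harg]
  have h1 : (n : ℚ) + 1 + 1 ≠ 0 := by positivity
  push_cast
  field_simp
  linear_combination -key

lemma sum_split (n m : ℕ) (f : ℕ → ℚ) :
    ∑ k ∈ Finset.range (n + 1 + 1), f k * (V (m + 1) (n + 1 - k) : ℚ)
      = ∑ k ∈ Finset.range (n + 1 + 1), f k * (V m (n + 1 - k) : ℚ)
        + ∑ k ∈ Finset.range (n + 1), f k * (V (m + 2) (n - k) : ℚ) := by
  rw [Finset.sum_range_succ, Finset.sum_range_succ (fun k => f k * (V m (n + 1 - k) : ℚ))]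
  have e0 : n + 1 - (n + 1) = 0 := by omega
  rw [e0, V_zero, V_zero]
  have key : ∀ k ∈ Finset.range (n + 1),
      f k * (V (m + 1) (n + 1 - k) : ℚ)
        = f k * (V m (n + 1 - k) : ℚ) + f k * (V (m + 2) (n - k) : ℚ) := by
    intro k hk
    have hk' : k ≤ n := Nat.lt_succ_iff.mp (Finset.mem_range.mp hk)
    have h1 : n + 1 - k = (n - k) + 1 := by omega
    rw [h1, V_pascal]
    push_cast
    ring
  rw [Finset.sum_congr rfl key, Finset.sum_add_distrib]
  ring

lemma Q : ∀ n m : ℕ,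
    (∑ k ∈ Finset.range (n + 1), catT k k * (V m (n - k) : ℚ)) = (V (m + 1) n : ℚ) := by
  intro n
  induction n with
  | zero => intro m; simp [catT_zero, V]
  | succ n ihn =>
    intro m
    induction m with
    | zero =>
      rw [Finset.sum_range_succ]
      have hstep : ∀ k ∈ Finset.range (n + 1),
          catT k k * (V 0 (n + 1 - k) : ℚ) = 2 * (catT k k * (V 1 (n - k) : ℚ)) := by
        intro k hk
        have hk' : k ≤ n := Nat.lt_succ_iff.mp (Finset.mem_range.mp hk)
        have h1 : n + 1 - k = (n - k) + 1 := by omega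
        have hV : V 0 ((n - k) + 1) = 2 * V 1 (n - k) := by
          unfold V
          have e1 : 2 * (n - k + 1) + 0 = (2 * (n - k) + 1) + 1 := by omega
          rw [e1, Nat.choose_succ_succ' (2 * (n - k) + 1) (n - k)]
          have e2 : Nat.choose (2 * (n - k) + 1) (n - k + 1)
              = Nat.choose (2 * (n - k) + 1) (n - k) := by
            rw [← Nat.choose_symm (by omega)]
            congr 1
            omega
          omega
        rw [h1, hV]
        push_cast
        ring
      rw [Finset.sum_congr rfl hstep, ← Finset.mul_sum, ihn 1]
      have e0 : n + 1 - (n + 1) = 0 := by omega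
      rw [e0, V_zero, catalan_diff]
      have hP : Nat.choose (2 * (n + 1) + 1) (n + 1)
          = Nat.choose (2 * n + 2) n + Nat.choose (2 * n + 2) (n + 1) := by
        have e1 : 2 * (n + 1) + 1 = (2 * n + 2) + 1 := by omega
        rw [e1, Nat.choose_succ_succ' (2 * n + 2) n]
      have hV1 : V (0 + 1) (n + 1) = Nat.choose (2 * (n + 1) + 1) (n + 1) := rfl
      have hV2 : V 2 n = Nat.choose (2 * n + 2) n := rfl
      rw [hV1, hV2, hP]
      push_cast
      ring
    | succ m ihm =>
      rw [sum_split n m (fun k => catT k k), ihm, ihn (m + 2)]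
      have h := V_pascal (m + 1) n
      have e1 : m + 1 + 1 = m + 2 := by omega
      have e2 : m + 1 + 2 = m + 2 + 1 := by omega
      rw [e1, e2] at h
      exact_mod_cast h.symm

lemma S : ∀ n a m : ℕ,
    (∑ k ∈ Finset.range (n + 1), catT (a + k) k * (V m (n - k) : ℚ))
      = (V (m + a + 1) n : ℚ) := by
  intro n
  induction n with
  | zero => intro a m; simp [catT_zero, V]
  | succ n ihn =>
    intro a m
    induction a with
    | zero =>
      have h := Q (n + 1) m
      simpa using h
    | succ a iha =>
      rw [Finset.sum_range_succ']
      have hstep : ∀ k ∈ Finset.range (n + 1),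
          catT (a + 1 + (k + 1)) (k + 1) * (V m (n + 1 - (k + 1)) : ℚ)
            = catT (a + (k + 1)) (k + 1) * (V m (n + 1 - (k + 1)) : ℚ)
              + catT (a + 2 + k) k * (V m (n - k) : ℚ) := by
        intro k hk
        have e1 : a + 1 + (k + 1) = (a + k + 1) + 1 := by omega
        have e2 : a + (k + 1) = a + k + 1 := by omega
        have e3 : a + 2 + k = a + k + 1 + 1 := by omega
        have e4 : n + 1 - (k + 1) = n - k := by omega
        rw [e1, e2, e3, e4, catT_pascal (a + k + 1) k]
        ring
      rw [Finset.sum_congr rfl hstep, Finset.sum_add_distrib, ihn (a + 2) m]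
      have hfirst :
          (∑ k ∈ Finset.range (n + 1), catT (a + (k + 1)) (k + 1) * (V m (n + 1 - (k + 1)) : ℚ))
              + catT (a + 1 + 0) 0 * (V m (n + 1 - 0) : ℚ)
            = (V (m + a + 1) (n + 1) : ℚ) := by
        rw [catT_zero]
        have := iha
        rw [Finset.sum_range_succ'] at this
        rw [catT_zero] at this
        convert this using 3
      have hV := V_pascal (m + a + 1) n
      have e5 : m + a + 1 + 1 = m + (a + 1) + 1 := by omega
      have e6 : m + a + 1 + 2 = m + (a + 2) + 1 := by omega
      rw [e5, e6] at hV
      rw [add_right_comm]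
      rw [hfirst]
      exact_mod_cast hV.symm

/-- `∑_{j=C}^{B} C^{A-j}_{B-j} * C(2j+1, j-C) = C(A+B+2, B-C)`. -/
theorem catalan_triangle_binomial_sum (A B C : ℕ) (hCB : C ≤ B) (hBA : B ≤ A) :
    ∑ j ∈ Finset.Icc C B, catT (A - j) (B - j) * Nat.choose (2 * j + 1) (j - C)
      = (Nat.choose (A + B + 2) (B - C) : ℚ) := by
  have hsum := S (B - C) (A - B) (2 * C + 1)
  rw [← Finset.Ico_add_one_right_eq_Icc, Finset.sum_Ico_eq_sum_range]
  have hrange : B + 1 - C = (B - C) + 1 := by omega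
  rw [hrange]
  rw [← Finset.sum_range_reflect]
  have hterm : ∀ k ∈ Finset.range (B - C + 1),
      catT (A - (C + ((B - C) + 1 - 1 - k))) (B - (C + ((B - C) + 1 - 1 - k)))
          * (Nat.choose (2 * (C + ((B - C) + 1 - 1 - k)) + 1) ((C + ((B - C) + 1 - 1 - k)) - C) : ℚ)
        = catT ((A - B) + k) k * (V (2 * C + 1) ((B - C) - k) : ℚ) := by
    intro k hk
    have hk' : k ≤ B - C := Nat.lt_succ_iff.mp (Finset.mem_range.mp hk)
    have e1 : A - (C + ((B - C) + 1 - 1 - k)) = (A - B) + k := by omega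
    have e2 : B - (C + ((B - C) + 1 - 1 - k)) = k := by omega
    have e3 : 2 * (C + ((B - C) + 1 - 1 - k)) + 1 = 2 * ((B - C) - k) + (2 * C + 1) := by omega
    have e4 : (C + ((B - C) + 1 - 1 - k)) - C = (B - C) - k := by omega
    rw [e1, e2, e3, e4]
    rfl
  rw [Finset.sum_congr rfl hterm, hsum]
  have e5 : 2 * (B - C) + (2 * C + 1 + (A - B) + 1) = A + B + 2 := by omega
  unfold V
  rw [e5]
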